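/- Let e_1, …, e_L be the edges, in order from s to t, of a shortest directed s–t path in the finite directed graph G = (V, E) (so L is the minimum number of edges of a directed path from s to t). Then in the search network together with the readout network for G, each readout neuron R_{e_j} (1 ≤ j ≤ L) spikes exactly once, and its spike occurs at time L + j (taking the transmitter's spike at time 0). In particular, the readout neurons along the path spike at consecutive time steps in path order, so the augmenting path can be decoded from the order of spike timings. -/

import Mathlib

/-- `reachIn E n a b` holds iff there is a directed path with exactly `n` edges
from `a` to `b` using edges in `E`. -/
def reachIn {V : Type*} (E : Finset (V × V)) : ℕ → V → V → Prop
  | 0, a, b => a = b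
  | n + 1, a, b => ∃ c, (a, c) ∈ E ∧ reachIn E n c b

namespace SNN

variable {V : Type*}

lemma reachIn_trans {E : Finset (V × V)} :
    ∀ {m : ℕ} {a : V} {n : ℕ} {b c : V},
      reachIn E m a b → reachIn E n b c → reachIn E (m + n) a c := by
  intro m
  induction m with
  | zero =>
    intro a n b c h1 h2
    cases h1
    simpa using h2
  | succ k ih =>
    intro a n b c h1 h2
    obtain ⟨d, hd, hr⟩ := h1
    have : reachIn E ((k + n) + 1) a c := ⟨d, hd, ih hr h2⟩
    simpa [Nat.succ_add] using this

def reaches (E : Finset (V × V)) (t a : V) : Prop := ∃ n, reachIn E n a t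

open Classical in
noncomputable def dst (E : Finset (V × V)) (t a : V) : ℕ :=
  if h : reaches E t a then Nat.find h else 0

lemma dst_spec {E : Finset (V × V)} {t a : V} (h : reaches E t a) :
    reachIn E (dst E t a) a t := by
  classical
  rw [dst, dif_pos h]
  exact Nat.find_spec h

lemma dst_le {E : Finset (V × V)} {t a : V} {n : ℕ} (h : reachIn E n a t) :
    dst E t a ≤ n := by
  classical
  rw [dst, dif_pos ⟨n, h⟩]
  exact Nat.find_le h

lemma not_reachIn_lt_dst {E : Finset (V × V)} {t a : V} {m : ℕ}
    (h : reaches E t a) (hm : m < dst E t a) : ¬ reachIn E m a t := by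
  classical
  rw [dst, dif_pos h] at hm
  exact Nat.find_min h hm

lemma reaches_of_edge {E : Finset (V × V)} {t a b : V}
    (he : (a, b) ∈ E) (h : reaches E t b) : reaches E t a :=
  ⟨dst E t b + 1, ⟨b, he, dst_spec h⟩⟩

lemma dst_edge_le {E : Finset (V × V)} {t a b : V}
    (he : (a, b) ∈ E) (h : reaches E t b) : dst E t a ≤ dst E t b + 1 :=
  dst_le ⟨b, he, dst_spec h⟩

lemma dst_succ_decomp {E : Finset (V × V)} {t a : V} {m : ℕ}
    (h : reaches E t a) (hd : dst E t a = m + 1) :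
    ∃ c, (a, c) ∈ E ∧ reaches E t c ∧ dst E t c = m := by
  have hs := dst_spec h
  rw [hd] at hs
  obtain ⟨c, hc, hr⟩ := hs
  refine ⟨c, hc, ⟨m, hr⟩, ?_⟩
  have h1 : dst E t c ≤ m := dst_le hr
  rcases lt_or_eq_of_le h1 with h2 | h2
  · exfalso
    have : reachIn E (dst E t c + 1) a t := ⟨c, hc, dst_spec ⟨m, hr⟩⟩
    have := dst_le this
    omega
  · exact h2

lemma dst_eq_zero {E : Finset (V × V)} {t a : V}
    (h : reaches E t a) (hd : dst E t a = 0) : a = t := by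
  have hs := dst_spec h
  rw [hd] at hs
  exact hs

/-- Spike times of readout neurons. -/
inductive RS (E : Finset (V × V)) (s t : V) : (V × V) → ℕ → Prop
  | base (e : V × V) (he : e ∈ E) (h1 : e.1 = s) (h2 : reaches E t e.2) :
      RS E s t e (dst E t e.2 + 2)
  | step (e' e : V × V) (he' : e' ∈ E) (he : e ∈ E) (h : e'.2 = e.1) (τ : ℕ)
      (hr : RS E s t e' τ) : RS E s t e (τ + 1)

def hasRS (E : Finset (V × V)) (s t : V) (e : V × V) : Prop := ∃ τ, RS E s t e τ

open Classical in
noncomputable def FR (E : Finset (V × V)) (s t : V) (e : V × V) : ℕ :=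
  if h : hasRS E s t e then Nat.find h else 0

lemma FR_spec {E : Finset (V × V)} {s t : V} {e : V × V} (h : hasRS E s t e) :
    RS E s t e (FR E s t e) := by
  classical
  rw [FR, dif_pos h]
  exact Nat.find_spec h

lemma FR_le {E : Finset (V × V)} {s t : V} {e : V × V} {τ : ℕ} (h : RS E s t e τ) :
    FR E s t e ≤ τ := by
  classical
  rw [FR, dif_pos ⟨τ, h⟩]
  exact Nat.find_le h

lemma not_RS_lt_FR {E : Finset (V × V)} {s t : V} {e : V × V} {τ : ℕ}
    (h : hasRS E s t e) (hτ : τ < FR E s t e) : ¬ RS E s t e τ := by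
  classical
  rw [FR, dif_pos h] at hτ
  exact Nat.find_min h hτ

lemma RS_src {E : Finset (V × V)} {s t : V} (hsIn : ∀ e ∈ E, e.2 ≠ s)
    {e : V × V} {τ : ℕ} (h : RS E s t e τ) (h1 : e.1 = s) :
    reaches E t e.2 ∧ τ = dst E t e.2 + 2 := by
  cases h with
  | base _ he h1' h2 => exact ⟨h2, rfl⟩
  | step e' _ he' he hh τ' hr => exact absurd (h1 ▸ hh) (hsIn e' he')


open Classical in
noncomputable def Bnd [DecidableEq V] (E : Finset (V × V)) (t : V) (e : V × V) (τ : ℕ) : ℤ :=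
  ∑ e' ∈ E.filter (fun e' => e'.1 = e.2),
    (if reaches E t e'.2 ∧ dst E t e.2 ≤ dst E t e'.2 ∧ dst E t e'.2 + 2 ≤ τ
      then (1 : ℤ) else 0)

lemma Bnd_nonneg [DecidableEq V] (E : Finset (V × V)) (t : V) (e : V × V) (τ : ℕ) :
    0 ≤ Bnd E t e τ := by
  classical
  refine Finset.sum_nonneg fun e' _ => by positivity

lemma Bnd_le_card [DecidableEq V] (E : Finset (V × V)) (t : V) (e : V × V) (τ : ℕ) :
    Bnd E t e τ ≤ (E.card : ℤ) := by
  classical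
  calc Bnd E t e τ ≤ ∑ _e' ∈ E.filter (fun e' => e'.1 = e.2), (1 : ℤ) := by
        refine Finset.sum_le_sum fun e' _ => by split_ifs <;> simp
    _ = ((E.filter (fun e' => e'.1 = e.2)).card : ℤ) := by simp
    _ ≤ (E.card : ℤ) := by exact_mod_cast Finset.card_filter_le _ _

/-- Full invariant for the potentials of the `H` neurons at time `τ`. -/
def HInv [DecidableEq V] (E : Finset (V × V)) (t : V) (VH : V × V → ℕ → ℤ) (τ : ℕ) : Prop :=
  ∀ e ∈ E,
    (¬ reaches E t e.2 → VH e τ = (E.card : ℤ) + 1) ∧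
    (reaches E t e.2 →
      (τ < dst E t e.2 + 1 → VH e τ = (E.card : ℤ) + 1) ∧
      (τ = dst E t e.2 + 1 → (E.card : ℤ) + 2 ≤ VH e τ) ∧
      (dst E t e.2 + 2 ≤ τ → 0 ≤ VH e τ ∧ VH e τ ≤ Bnd E t e τ))

lemma HInv_char [DecidableEq V] {E : Finset (V × V)} {t : V} {VH : V × V → ℕ → ℤ} {τ : ℕ}
    (h : HInv E t VH τ) :
    ∀ e ∈ E, (((E.card : ℤ) + 2 ≤ VH e τ) ↔
      (reaches E t e.2 ∧ τ = dst E t e.2 + 1)) := by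
  intro e he
  obtain ⟨h1, h2⟩ := h e he
  constructor
  · intro hs
    by_cases hre : reaches E t e.2
    · refine ⟨hre, ?_⟩
      obtain ⟨g1, g2, g3⟩ := h2 hre
      rcases lt_trichotomy τ (dst E t e.2 + 1) with hτ | hτ | hτ
      · have := g1 hτ; omega
      · exact hτ
      · have hb := g3 (by omega)
        have := Bnd_le_card E t e τ
        omega
    · have := h1 hre; omega
  · rintro ⟨hre, rfl⟩
    exact (h2 hre).2.1 rfl

lemma HInv_all [DecidableEq V] (E : Finset (V × V)) (t : V)
    (VTr : ℕ → ℤ) (VH : V × V → ℕ → ℤ)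
    (hTrChar : ∀ τ, ((1 : ℤ) ≤ VTr τ ↔ τ = 0))
    (hH0 : ∀ e ∈ E, VH e 0 = (E.card : ℤ) + 1)
    (hHEvol : ∀ e ∈ E, ∀ τ, VH e (τ + 1) =
      max 0 ((1 : ℤ) * (if (E.card : ℤ) + 2 ≤ VH e τ then (0 : ℤ) else VH e τ) +
        (∑ e' ∈ E.filter (fun e' => e'.1 = e.2),
          (if (E.card : ℤ) + 2 ≤ VH e' τ then (1 : ℤ) else 0)) +
        (if e.2 = t ∧ (1 : ℤ) ≤ VTr τ then (1 : ℤ) else 0))) :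
    ∀ τ, HInv E t VH τ := by
  classical
  intro τ
  induction τ with
  | zero =>
    intro e he
    refine ⟨fun _ => hH0 e he, fun _ => ⟨fun _ => hH0 e he, fun h => by omega,
      fun h => by omega⟩⟩
  | succ τ ih =>
    have char := HInv_char ih
    intro e he
    have hev := hHEvol e he τ
    have hs : (∑ e' ∈ E.filter (fun e' => e'.1 = e.2),
        (if (E.card : ℤ) + 2 ≤ VH e' τ then (1 : ℤ) else 0)) =
        ∑ e' ∈ E.filter (fun e' => e'.1 = e.2),
          (if reaches E t e'.2 ∧ τ = dst E t e'.2 + 1 then (1 : ℤ) else 0) := by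
      refine Finset.sum_congr rfl fun e' he' => ?_
      rw [Finset.mem_filter] at he'
      exact if_congr (char e' he'.1) rfl rfl
    have ht : (if e.2 = t ∧ (1 : ℤ) ≤ VTr τ then (1 : ℤ) else 0) =
        (if e.2 = t ∧ τ = 0 then (1 : ℤ) else 0) :=
      if_congr (and_congr_right' (hTrChar τ)) rfl rfl
    rw [hs, ht, one_mul] at hev
    set S : ℤ := ∑ e' ∈ E.filter (fun e' => e'.1 = e.2),
      (if reaches E t e'.2 ∧ τ = dst E t e'.2 + 1 then (1 : ℤ) else 0) with hSdef
    have hS0 : 0 ≤ S := Finset.sum_nonneg fun e' _ => by positivity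
    by_cases hre : reaches E t e.2
    · obtain ⟨g1, g2, g3⟩ := (ih e he).2 hre
      rcases Nat.lt_trichotomy τ (dst E t e.2) with hτ | hτ | hτ
      · -- τ + 1 < dst + 1 : potential stays at C + 1
        have hS : S = 0 := by
          refine Finset.sum_eq_zero fun e' he' => ?_
          rw [Finset.mem_filter] at he'
          rw [if_neg]
          rintro ⟨hr', ht'⟩
          have hmem : (e.2, e'.2) ∈ E := by rw [← he'.2]; simpa using he'.1
          have := dst_edge_le hmem hr'
          omega
        have hT : (if e.2 = t ∧ τ = 0 then (1 : ℤ) else 0) = 0 := by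
          rw [if_neg]
          rintro ⟨ht', hτ0⟩
          have : dst E t e.2 ≤ 0 := dst_le (show reachIn E 0 e.2 t from ht')
          omega
        have hval : VH e τ = (E.card : ℤ) + 1 := g1 (by omega)
        rw [if_neg (by omega), hval, hS, hT] at hev
        have hres : VH e (τ + 1) = (E.card : ℤ) + 1 := by
          rw [hev, add_zero, add_zero]
          exact max_eq_right (by positivity)
        exact ⟨fun hn => absurd hre hn, fun _ =>
          ⟨fun _ => hres, fun h => by omega, fun h => by omega⟩⟩
      · -- τ = dst : spike at τ + 1
        have hval : VH e τ = (E.card : ℤ) + 1 := g1 (by omega)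
        have hST : (1 : ℤ) ≤ S + (if e.2 = t ∧ τ = 0 then (1 : ℤ) else 0) := by
          rcases eq_or_ne (dst E t e.2) 0 with hd0 | hne
          · have het : e.2 = t := dst_eq_zero hre hd0
            rw [if_pos ⟨het, by omega⟩]
            omega
          · obtain ⟨m, hd⟩ := Nat.exists_eq_succ_of_ne_zero hne
            obtain ⟨c, hc, hrc, hdc⟩ := dst_succ_decomp hre hd
            have hmem : (e.2, c) ∈ E.filter (fun e' => e'.1 = e.2) := by
              rw [Finset.mem_filter]; exact ⟨hc, rfl⟩
            have h1 : (1 : ℤ) ≤ S := by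
              rw [hSdef]
              refine le_trans ?_ (Finset.single_le_sum
                (f := fun e' => (if reaches E t e'.2 ∧ τ = dst E t e'.2 + 1
                  then (1 : ℤ) else 0)) (fun e' _ => by positivity) hmem)
              show (1 : ℤ) ≤
                (if reaches E t c ∧ τ = dst E t c + 1 then (1 : ℤ) else 0)
              rw [if_pos ⟨hrc, by omega⟩]
            have : (0:ℤ) ≤ (if e.2 = t ∧ τ = 0 then (1 : ℤ) else 0) := by positivity
            omega
        rw [if_neg (by omega), hval] at hev
        have hres : (E.card : ℤ) + 2 ≤ VH e (τ + 1) := by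
          rw [hev]
          have := le_max_right (0 : ℤ)
            (((E.card : ℤ) + 1 + S) + (if e.2 = t ∧ τ = 0 then (1 : ℤ) else 0))
          omega
        exact ⟨fun hn => absurd hre hn, fun _ =>
          ⟨fun h => by omega, fun _ => hres, fun h => by omega⟩⟩
      · -- τ ≥ dst + 1
        have hT : (if e.2 = t ∧ τ = 0 then (1 : ℤ) else 0) = 0 := by
          rw [if_neg]
          rintro ⟨ht', hτ0⟩
          have : dst E t e.2 ≤ 0 := dst_le (show reachIn E 0 e.2 t from ht')
          omega
        rw [hT, add_zero] at hev
        rcases Nat.eq_or_lt_of_le hτ with hτ1 | hτ2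
        · -- τ = dst + 1 : reset
          have hsp : (E.card : ℤ) + 2 ≤ VH e τ := g2 (by omega)
          rw [if_pos hsp] at hev
          have hSB : S ≤ Bnd E t e (τ + 1) := by
            rw [hSdef, Bnd]
            apply Finset.sum_le_sum
            intro e' he'
            by_cases hr : reaches E t e'.2
            · simp only [hr, true_and]
              split_ifs <;> omega
            · simp only [hr, false_and, if_false]
              norm_num
          have hres1 : 0 ≤ VH e (τ + 1) := by rw [hev]; exact le_max_left _ _
          have hres2 : VH e (τ + 1) ≤ Bnd E t e (τ + 1) := by
            rw [hev]
            exact max_le (Bnd_nonneg _ _ _ _) (by omega)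
          exact ⟨fun hn => absurd hre hn, fun _ =>
            ⟨fun h => by omega, fun h => by omega, fun _ => ⟨hres1, hres2⟩⟩⟩
        · -- τ ≥ dst + 2 : accumulation
          obtain ⟨hnn, hbd⟩ := g3 (by omega)
          have hnsp : ¬ ((E.card : ℤ) + 2 ≤ VH e τ) := by
            have := Bnd_le_card E t e τ
            omega
          rw [if_neg hnsp] at hev
          have hSB : Bnd E t e τ + S ≤ Bnd E t e (τ + 1) := by
            rw [hSdef, Bnd, Bnd, ← Finset.sum_add_distrib]
            apply Finset.sum_le_sum
            intro e' he'
            by_cases hr : reaches E t e'.2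
            · simp only [hr, true_and]
              split_ifs <;> omega
            · simp only [hr, false_and, if_false]
              norm_num
          have hres1 : 0 ≤ VH e (τ + 1) := by rw [hev]; exact le_max_left _ _
          have hres2 : VH e (τ + 1) ≤ Bnd E t e (τ + 1) := by
            rw [hev]
            exact max_le (Bnd_nonneg _ _ _ _) (by omega)
          exact ⟨fun hn => absurd hre hn, fun _ =>
            ⟨fun h => by omega, fun h => by omega, fun _ => ⟨hres1, hres2⟩⟩⟩
    · -- e.2 does not reach t : potential stays at C + 1 forever
      have hS : S = 0 := by
        refine Finset.sum_eq_zero fun e' he' => ?_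
        rw [Finset.mem_filter] at he'
        rw [if_neg]
        rintro ⟨hr', -⟩
        have hmem : (e.2, e'.2) ∈ E := by rw [← he'.2]; simpa using he'.1
        exact hre (reaches_of_edge hmem hr')
      have hT : (if e.2 = t ∧ τ = 0 then (1 : ℤ) else 0) = 0 := by
        rw [if_neg]
        rintro ⟨ht', -⟩
        exact hre ⟨0, ht'⟩
      have hval : VH e τ = (E.card : ℤ) + 1 := (ih e he).1 hre
      rw [if_neg (by omega), hval, hS, hT] at hev
      have hres : VH e (τ + 1) = (E.card : ℤ) + 1 := by
        rw [hev, add_zero, add_zero]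
        exact max_eq_right (by positivity)
      exact ⟨fun _ => hres, fun h => absurd h hre⟩

lemma RS_cases {E : Finset (V × V)} {s t : V} {e : V × V} {τ : ℕ}
    (h : RS E s t e τ) :
    (e.1 = s ∧ reaches E t e.2 ∧ τ = dst E t e.2 + 2) ∨
    (∃ e' ∈ E, e'.2 = e.1 ∧ ∃ τ', τ = τ' + 1 ∧ RS E s t e' τ') := by
  cases h with
  | base _ he h1 h2 => exact Or.inl ⟨h1, h2, rfl⟩
  | step e' _ he' he hh τ' hr => exact Or.inr ⟨e', he', hh, τ', rfl, hr⟩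

open Classical in
noncomputable def RBnd [DecidableEq V] (E : Finset (V × V)) (s t : V)
    (e : V × V) (τ : ℕ) : ℤ :=
  ∑ e' ∈ E.filter (fun e' => e'.2 = e.1),
    (if hasRS E s t e' ∧ FR E s t e < FR E s t e' + 1 ∧ FR E s t e' + 1 ≤ τ
      then (1 : ℤ) else 0)

lemma RBnd_nonneg [DecidableEq V] (E : Finset (V × V)) (s t : V)
    (e : V × V) (τ : ℕ) : 0 ≤ RBnd E s t e τ := by
  classical
  refine Finset.sum_nonneg fun e' _ => by positivity

lemma RBnd_le_card [DecidableEq V] (E : Finset (V × V)) (s t : V)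
    (e : V × V) (τ : ℕ) : RBnd E s t e τ ≤ (E.card : ℤ) := by
  classical
  calc RBnd E s t e τ ≤ ∑ _e' ∈ E.filter (fun e' => e'.2 = e.1), (1 : ℤ) := by
        refine Finset.sum_le_sum fun e' _ => by split_ifs <;> simp
    _ = ((E.filter (fun e' => e'.2 = e.1)).card : ℤ) := by simp
    _ ≤ (E.card : ℤ) := by exact_mod_cast Finset.card_filter_le _ _

/-- Full invariant for the potentials of the readout neurons at time `τ`. -/
def RInv [DecidableEq V] (E : Finset (V × V)) (s t : V) (VR : V × V → ℕ → ℤ)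
    (τ : ℕ) : Prop :=
  ∀ e ∈ E,
    (¬ hasRS E s t e → VR e τ = (E.card : ℤ) + 1) ∧
    (hasRS E s t e →
      (τ < FR E s t e → VR e τ = (E.card : ℤ) + 1) ∧
      (τ = FR E s t e → (E.card : ℤ) + 2 ≤ VR e τ) ∧
      (FR E s t e + 1 ≤ τ → 0 ≤ VR e τ ∧ VR e τ ≤ RBnd E s t e τ))

lemma RInv_char [DecidableEq V] {E : Finset (V × V)} {s t : V}
    {VR : V × V → ℕ → ℤ} {τ : ℕ} (h : RInv E s t VR τ) :
    ∀ e ∈ E, (((E.card : ℤ) + 2 ≤ VR e τ) ↔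
      (hasRS E s t e ∧ τ = FR E s t e)) := by
  intro e he
  obtain ⟨h1, h2⟩ := h e he
  constructor
  · intro hs
    by_cases hrs : hasRS E s t e
    · refine ⟨hrs, ?_⟩
      obtain ⟨g1, g2, g3⟩ := h2 hrs
      rcases lt_trichotomy τ (FR E s t e) with hτ | hτ | hτ
      · have := g1 hτ; omega
      · exact hτ
      · have hb := g3 (by omega)
        have := RBnd_le_card E s t e τ
        omega
    · have := h1 hrs; omega
  · rintro ⟨hrs, rfl⟩
    exact (h2 hrs).2.1 rfl

lemma RInv_all [DecidableEq V] (E : Finset (V × V)) (s t : V)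
    (hsIn : ∀ e ∈ E, e.2 ≠ s)
    (VH VR : V × V → ℕ → ℤ)
    (hHChar : ∀ τ, ∀ e ∈ E, (((E.card : ℤ) + 2 ≤ VH e τ) ↔
      (reaches E t e.2 ∧ τ = dst E t e.2 + 1)))
    (hR0 : ∀ e ∈ E, VR e 0 = (E.card : ℤ) + 1)
    (hREvol : ∀ e ∈ E, ∀ τ, VR e (τ + 1) =
      max 0 ((1 : ℤ) * (if (E.card : ℤ) + 2 ≤ VR e τ then (0 : ℤ) else VR e τ) +
        (if e.1 = s ∧ (E.card : ℤ) + 2 ≤ VH e τ then (1 : ℤ) else 0) +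
        (∑ e' ∈ E.filter (fun e' => e'.2 = e.1),
          (if (E.card : ℤ) + 2 ≤ VR e' τ then (1 : ℤ) else 0)))) :
    ∀ τ, RInv E s t VR τ := by
  classical
  intro τ
  induction τ with
  | zero =>
    intro e he
    refine ⟨fun _ => hR0 e he, fun _ => ⟨fun _ => hR0 e he, ?_, fun h => by omega⟩⟩
    intro h0
    exfalso
    have := FR_spec ‹hasRS E s t e›
    rw [← h0] at this
    rcases RS_cases this with ⟨-, -, h⟩ | ⟨e', -, -, τ', h, -⟩ <;> omega
  | succ τ ih =>
    have char := RInv_char ih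
    intro e he
    have hev := hREvol e he τ
    have hh : (if e.1 = s ∧ (E.card : ℤ) + 2 ≤ VH e τ then (1 : ℤ) else 0) =
        (if e.1 = s ∧ reaches E t e.2 ∧ τ = dst E t e.2 + 1 then (1 : ℤ) else 0) :=
      if_congr (and_congr_right' (hHChar τ e he)) rfl rfl
    have hs : (∑ e' ∈ E.filter (fun e' => e'.2 = e.1),
        (if (E.card : ℤ) + 2 ≤ VR e' τ then (1 : ℤ) else 0)) =
        ∑ e' ∈ E.filter (fun e' => e'.2 = e.1),
          (if hasRS E s t e' ∧ τ = FR E s t e' then (1 : ℤ) else 0) := by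
      refine Finset.sum_congr rfl fun e' he' => ?_
      rw [Finset.mem_filter] at he'
      exact if_congr (char e' he'.1) rfl rfl
    rw [hh, hs, one_mul] at hev
    set S : ℤ := ∑ e' ∈ E.filter (fun e' => e'.2 = e.1),
      (if hasRS E s t e' ∧ τ = FR E s t e' then (1 : ℤ) else 0) with hSdef
    have hS0 : 0 ≤ S := Finset.sum_nonneg fun e' _ => by positivity
    by_cases hrs : hasRS E s t e
    · obtain ⟨g1, g2, g3⟩ := (ih e he).2 hrs
      rcases Nat.lt_trichotomy (τ + 1) (FR E s t e) with hτ | hτ | hτ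
      · -- τ + 1 < FR e
        have hH0' : (if e.1 = s ∧ reaches E t e.2 ∧ τ = dst E t e.2 + 1
            then (1 : ℤ) else 0) = 0 := by
          rw [if_neg]
          rintro ⟨h1, h2, h3⟩
          have : RS E s t e (dst E t e.2 + 2) := RS.base e he h1 h2
          have := FR_le this
          omega
        have hS : S = 0 := by
          refine Finset.sum_eq_zero fun e' he' => ?_
          rw [Finset.mem_filter] at he'
          rw [if_neg]
          rintro ⟨hr', ht'⟩
          have : RS E s t e (FR E s t e' + 1) :=
            RS.step e' e he'.1 he he'.2 _ (FR_spec hr')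
          have := FR_le this
          omega
        have hval : VR e τ = (E.card : ℤ) + 1 := g1 (by omega)
        rw [if_neg (by omega), hval, hH0', hS] at hev
        have hres : VR e (τ + 1) = (E.card : ℤ) + 1 := by
          rw [hev, add_zero, add_zero]
          exact max_eq_right (by omega)
        exact ⟨fun hn => absurd hrs hn, fun _ =>
          ⟨fun _ => hres, fun h => by omega, fun h => by omega⟩⟩
      · -- τ + 1 = FR e : the spike
        have hval : VR e τ = (E.card : ℤ) + 1 := g1 (by omega)
        have hRSf : RS E s t e (τ + 1) := by rw [hτ]; exact FR_spec hrs
        have hST : (1 : ℤ) ≤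
            (if e.1 = s ∧ reaches E t e.2 ∧ τ = dst E t e.2 + 1
              then (1 : ℤ) else 0) + S := by
          rcases RS_cases hRSf with ⟨h1, h2, h3⟩ | ⟨e', he', hee, τ', hττ, hRS'⟩
          · rw [if_pos ⟨h1, h2, by omega⟩]
            omega
          · have hττ' : τ' = τ := by omega
            rw [hττ'] at hRS'
            have hrs' : hasRS E s t e' := ⟨τ, hRS'⟩
            have hFRe' : FR E s t e' = τ := by
              have hle := FR_le hRS'
              rcases Nat.eq_or_lt_of_le hle with h | h
              · exact h
              · exfalso
                have : RS E s t e (FR E s t e' + 1) :=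
                  RS.step e' e he' he hee _ (FR_spec hrs')
                have := FR_le this
                omega
            have hmem : e' ∈ E.filter (fun x => x.2 = e.1) := by
              rw [Finset.mem_filter]; exact ⟨he', hee⟩
            have h1 : (1 : ℤ) ≤ S := by
              rw [hSdef]
              refine le_trans ?_ (Finset.single_le_sum
                (f := fun x => (if hasRS E s t x ∧ τ = FR E s t x
                  then (1 : ℤ) else 0)) (fun x _ => by positivity) hmem)
              show (1 : ℤ) ≤
                (if hasRS E s t e' ∧ τ = FR E s t e' then (1 : ℤ) else 0)
              rw [if_pos ⟨hrs', hFRe'.symm⟩]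
            have : (0:ℤ) ≤ (if e.1 = s ∧ reaches E t e.2 ∧ τ = dst E t e.2 + 1
              then (1 : ℤ) else 0) := by positivity
            omega
        rw [if_neg (by omega), hval] at hev
        have hres : (E.card : ℤ) + 2 ≤ VR e (τ + 1) := by
          rw [hev]
          have := le_max_right (0 : ℤ)
            (((E.card : ℤ) + 1 +
              (if e.1 = s ∧ reaches E t e.2 ∧ τ = dst E t e.2 + 1
                then (1 : ℤ) else 0)) + S)
          omega
        exact ⟨fun hn => absurd hrs hn, fun _ =>
          ⟨fun h => by omega, fun _ => hres, fun h => by omega⟩⟩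
      · -- τ + 1 > FR e
        have hH0' : (if e.1 = s ∧ reaches E t e.2 ∧ τ = dst E t e.2 + 1
            then (1 : ℤ) else 0) = 0 := by
          rw [if_neg]
          rintro ⟨h1, h2, h3⟩
          have := RS_src hsIn (FR_spec hrs) h1
          omega
        rw [hH0', add_zero] at hev
        rcases Nat.eq_or_lt_of_le (by omega : FR E s t e ≤ τ) with hτ1 | hτ2
        · -- τ = FR e : reset
          have hsp : (E.card : ℤ) + 2 ≤ VR e τ := g2 hτ1.symm
          rw [if_pos hsp] at hev
          have hSB : S ≤ RBnd E s t e (τ + 1) := by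
            rw [hSdef, RBnd]
            apply Finset.sum_le_sum
            intro e' he'
            by_cases hr' : hasRS E s t e'
            · simp only [hr', true_and]
              split_ifs <;> omega
            · simp only [hr', false_and, if_false]
              norm_num
          have hres1 : 0 ≤ VR e (τ + 1) := by rw [hev]; exact le_max_left _ _
          have hres2 : VR e (τ + 1) ≤ RBnd E s t e (τ + 1) := by
            rw [hev]
            exact max_le (RBnd_nonneg _ _ _ _ _) (by omega)
          exact ⟨fun hn => absurd hrs hn, fun _ =>
            ⟨fun h => by omega, fun h => by omega, fun _ => ⟨hres1, hres2⟩⟩⟩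
        · -- τ ≥ FR e + 1 : accumulation
          obtain ⟨hnn, hbd⟩ := g3 (by omega)
          have hnsp : ¬ ((E.card : ℤ) + 2 ≤ VR e τ) := by
            have := RBnd_le_card E s t e τ
            omega
          rw [if_neg hnsp] at hev
          have hSB : RBnd E s t e τ + S ≤ RBnd E s t e (τ + 1) := by
            rw [hSdef, RBnd, RBnd, ← Finset.sum_add_distrib]
            apply Finset.sum_le_sum
            intro e' he'
            by_cases hr' : hasRS E s t e'
            · simp only [hr', true_and]
              split_ifs <;> omega
            · simp only [hr', false_and, if_false]
              norm_num
          have hres1 : 0 ≤ VR e (τ + 1) := by rw [hev]; exact le_max_left _ _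
          have hres2 : VR e (τ + 1) ≤ RBnd E s t e (τ + 1) := by
            rw [hev]
            exact max_le (RBnd_nonneg _ _ _ _ _) (by omega)
          exact ⟨fun hn => absurd hrs hn, fun _ =>
            ⟨fun h => by omega, fun h => by omega, fun _ => ⟨hres1, hres2⟩⟩⟩
    · -- e never spikes
      have hH0' : (if e.1 = s ∧ reaches E t e.2 ∧ τ = dst E t e.2 + 1
          then (1 : ℤ) else 0) = 0 := by
        rw [if_neg]
        rintro ⟨h1, h2, -⟩
        exact hrs ⟨_, RS.base e he h1 h2⟩
      have hS : S = 0 := by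
        refine Finset.sum_eq_zero fun e' he' => ?_
        rw [Finset.mem_filter] at he'
        rw [if_neg]
        rintro ⟨hr', -⟩
        exact hrs ⟨_, RS.step e' e he'.1 he he'.2 _ (FR_spec hr')⟩
      have hval : VR e τ = (E.card : ℤ) + 1 := (ih e he).1 hrs
      rw [if_neg (by omega), hval, hH0', hS] at hev
      have hres : VR e (τ + 1) = (E.card : ℤ) + 1 := by
        rw [hev, add_zero, add_zero]
        exact max_eq_right (by omega)
      exact ⟨fun _ => hres, fun h => absurd h hrs⟩


lemma TrChar (VTr : ℕ → ℤ) (hTr0 : VTr 0 = 1)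
    (hTrEvol : ∀ τ, VTr (τ + 1) =
      max 0 ((1 : ℤ) * (if (1 : ℤ) ≤ VTr τ then (0 : ℤ) else VTr τ))) :
    ∀ τ, ((1 : ℤ) ≤ VTr τ ↔ τ = 0) := by
  have hz : ∀ τ, VTr (τ + 1) = 0 := by
    intro τ
    induction τ with
    | zero => rw [hTrEvol 0, hTr0]; norm_num
    | succ k ihk => rw [hTrEvol (k + 1), ihk]; norm_num
  intro τ
  cases τ with
  | zero => simp [hTr0]
  | succ k => rw [hz k]; simp

end SNN

open SNN

/-- Let `e_1, …, e_L` be the consecutive edges (given by the vertex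
sequence `v 0 = s, v 1, …, v L = t`, with `e_j = (v (j-1), v j)`) of a shortest
directed `s`–`t` path in `G = (V, E)`.  Then in the search network together with the
readout network for `G`, each readout neuron `R e_j` spikes exactly once, namely at
time `L + j` (taking the transmitter's spike at time `0`); so the readout neurons
along the path spike at consecutive time steps in path order. -/
theorem shortest_path_readout_timing
    {V : Type*} [DecidableEq V] (E : Finset (V × V)) (s t : V)
    (hst : s ≠ t) (hsIn : ∀ e ∈ E, e.2 ≠ s) (htOut : ∀ e ∈ E, e.1 ≠ t)
    (L : ℕ) (v : ℕ → V)
    (hv0 : v 0 = s) (hvL : v L = t)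
    (hvE : ∀ j, j < L → (v j, v (j + 1)) ∈ E)
    (hshortest : ∀ n, reachIn E n s t → L ≤ n)
    (VTr : ℕ → ℤ) (VH VR : V × V → ℕ → ℤ)
    (hTr0 : VTr 0 = 1)
    (hTrEvol : ∀ τ, VTr (τ + 1) =
      max 0 ((1 : ℤ) * (if (1 : ℤ) ≤ VTr τ then (0 : ℤ) else VTr τ)))
    (hH0 : ∀ e ∈ E, VH e 0 = (E.card : ℤ) + 1)
    (hHEvol : ∀ e ∈ E, ∀ τ, VH e (τ + 1) =
      max 0 ((1 : ℤ) * (if (E.card : ℤ) + 2 ≤ VH e τ then (0 : ℤ) else VH e τ) +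
        (∑ e' ∈ E.filter (fun e' => e'.1 = e.2),
          (if (E.card : ℤ) + 2 ≤ VH e' τ then (1 : ℤ) else 0)) +
        (if e.2 = t ∧ (1 : ℤ) ≤ VTr τ then (1 : ℤ) else 0)))
    (hR0 : ∀ e ∈ E, VR e 0 = (E.card : ℤ) + 1)
    (hREvol : ∀ e ∈ E, ∀ τ, VR e (τ + 1) =
      max 0 ((1 : ℤ) * (if (E.card : ℤ) + 2 ≤ VR e τ then (0 : ℤ) else VR e τ) +
        (if e.1 = s ∧ (E.card : ℤ) + 2 ≤ VH e τ then (1 : ℤ) else 0) +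
        (∑ e' ∈ E.filter (fun e' => e'.2 = e.1),
          (if (E.card : ℤ) + 2 ≤ VR e' τ then (1 : ℤ) else 0)))) :
    ∀ j, j < L →
      ∀ τ, ((E.card : ℤ) + 2 ≤ VR (v j, v (j + 1)) τ ↔ τ = L + (j + 1)) := by
  classical
  have hL : 1 ≤ L := by
    rcases Nat.eq_zero_or_pos L with h | h
    · exfalso; apply hst; rw [← hv0, ← hvL, h]
    · exact h
  have hseg : ∀ k i, i + k ≤ L → reachIn E k (v i) (v (i + k)) := by
    intro k
    induction k with
    | zero => intro i _; exact rfl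
    | succ k ihk =>
      intro i hik
      refine ⟨v (i + 1), hvE i (by omega), ?_⟩
      have h2 : i + (k + 1) = (i + 1) + k := by omega
      rw [h2]
      exact ihk (i + 1) (by omega)
  have hreachv : ∀ i, i ≤ L → reachIn E (L - i) (v i) t := by
    intro i hi
    have h := hseg (L - i) i (by omega)
    rwa [show i + (L - i) = L by omega, hvL] at h
  have hreach : ∀ i, i ≤ L → reaches E t (v i) := fun i hi => ⟨_, hreachv i hi⟩
  have hdst : ∀ i, i ≤ L → dst E t (v i) = L - i := by
    intro i hi
    have h1 : dst E t (v i) ≤ L - i := dst_le (hreachv i hi)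
    have ha : reachIn E i s (v i) := by
      have h := hseg i 0 (by omega)
      rwa [show (0 : ℕ) + i = i by omega, hv0] at h
    have h2 : reachIn E (i + dst E t (v i)) s t :=
      reachIn_trans ha (dst_spec (hreach i hi))
    have := hshortest _ h2
    omega
  have hTrChar := TrChar VTr hTr0 hTrEvol
  have hHChar : ∀ τ, ∀ e ∈ E, (((E.card : ℤ) + 2 ≤ VH e τ) ↔
      (reaches E t e.2 ∧ τ = dst E t e.2 + 1)) :=
    fun τ => HInv_char (HInv_all E t VTr VH hTrChar hH0 hHEvol τ)
  have hRChar : ∀ τ, ∀ e ∈ E, (((E.card : ℤ) + 2 ≤ VR e τ) ↔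
      (hasRS E s t e ∧ τ = FR E s t e)) :=
    fun τ => RInv_char (RInv_all E s t hsIn VH VR hHChar hR0 hREvol τ)
  have hRSpath : ∀ j, j < L → RS E s t (v j, v (j + 1)) (L + j + 1) := by
    intro j
    induction j with
    | zero =>
      intro h0
      have hb : RS E s t (v 0, v 1) (dst E t (v 1) + 2) :=
        RS.base (v 0, v 1) (hvE 0 (by omega)) hv0 (hreach 1 (by omega))
      have heq : dst E t (v 1) + 2 = L + 0 + 1 := by
        have := hdst 1 hL
        omega
      rwa [heq] at hb
    | succ j ihj =>
      intro hj
      exact RS.step (v j, v (j + 1)) (v (j + 1), v (j + 2)) (hvE j (by omega))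
        (hvE (j + 1) hj) rfl (L + j + 1) (ihj (by omega))
  have hlower : ∀ e τ', RS E s t e τ' →
      ∃ k, 1 ≤ k ∧ reachIn E k s e.2 ∧ L + k ≤ τ' := by
    intro e τ' h
    induction h with
    | base f hf h1 h2 =>
      have hedge : (s, f.2) ∈ E := by rw [← h1]; simpa using hf
      have hr1 : reachIn E 1 s f.2 := ⟨f.2, hedge, rfl⟩
      refine ⟨1, le_refl 1, hr1, ?_⟩
      have hcomp : reachIn E (1 + dst E t f.2) s t :=
        reachIn_trans hr1 (dst_spec h2)
      have := hshortest _ hcomp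
      omega
    | step e' f he' hf hh τ'' hr ih =>
      obtain ⟨k, hk1, hk2, hk3⟩ := ih
      have hedge : (e'.2, f.2) ∈ E := by rw [hh]; simpa using hf
      have hr1 : reachIn E 1 e'.2 f.2 := ⟨f.2, hedge, rfl⟩
      exact ⟨k + 1, by omega, reachIn_trans hk2 hr1, by omega⟩
  intro j hj τ
  have heE : (v j, v (j + 1)) ∈ E := hvE j hj
  have hhas : hasRS E s t (v j, v (j + 1)) := ⟨L + j + 1, hRSpath j hj⟩
  have hFRle : FR E s t (v j, v (j + 1)) ≤ L + j + 1 := FR_le (hRSpath j hj)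
  have hFRge : L + j + 1 ≤ FR E s t (v j, v (j + 1)) := by
    obtain ⟨k, hk1, hk2, hk3⟩ := hlower _ _ (FR_spec hhas)
    have hcomp : reachIn E (k + (L - (j + 1))) s t :=
      reachIn_trans hk2 (hreachv (j + 1) (by omega))
    have := hshortest _ hcomp
    omega
  have hFR : FR E s t (v j, v (j + 1)) = L + j + 1 :=
    le_antisymm hFRle hFRge
  rw [hRChar τ _ heE, hFR]
  constructor
  · rintro ⟨-, h⟩; omega
  · intro h; exact ⟨hhas, by omega⟩
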